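/- Every chordal graph with at least one vertex has a simplicial vertex. -/

import Mathlib

/-- A graph is chordal if every cycle of length greater than 3 has a chord. -/
def IsChordal {V : Type*} (G : SimpleGraph V) : Prop :=
  ∀ (u : V) (c : G.Walk u u), c.IsCycle → 3 < c.length →
    ∃ x y, x ∈ c.support ∧ y ∈ c.support ∧ G.Adj x y ∧ s(x, y) ∉ c.edges

namespace ChordalAux

open SimpleGraph Finset

variable {V : Type*}

/-- The restriction of `G` to a finite vertex set `W`, as a graph on `V`. -/
def restr (G : SimpleGraph V) (W : Finset V) : SimpleGraph V where
  Adj x y := G.Adj x y ∧ x ∈ W ∧ y ∈ W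
  symm := ⟨fun _ _ ⟨h, hx, hy⟩ => ⟨h.symm, hy, hx⟩⟩
  loopless := ⟨fun x ⟨h, _, _⟩ => G.loopless.irrefl x h⟩

lemma restr_adj {G : SimpleGraph V} {W : Finset V} {x y : V} :
    (restr G W).Adj x y ↔ G.Adj x y ∧ x ∈ W ∧ y ∈ W := Iff.rfl

lemma restr_le {G : SimpleGraph V} {W : Finset V} : restr G W ≤ G := fun _ _ h => h.1

/-- All support vertices of a walk in `restr G W` lie in `W`, provided the final endpoint does. -/
lemma support_subset_restr {G : SimpleGraph V} {W : Finset V} {u w : V}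
    (p : (restr G W).Walk u w) (hw : w ∈ W) : ∀ v ∈ p.support, v ∈ W := by
  induction p with
  | nil => intro v hv; simp only [SimpleGraph.Walk.support_nil, List.mem_singleton] at hv
           exact hv ▸ hw
  | cons h q ih =>
    intro v hv
    rw [SimpleGraph.Walk.support_cons, List.mem_cons] at hv
    rcases hv with rfl | hv
    · exact h.2.1
    · exact ih hw v hv

/-- Transfer a walk in `restr G U` to `restr G U'` given that its support lies in `U'`. -/
lemma edges_mem_restr {G : SimpleGraph V} {U : Finset V} {U' : Finset V} {u w : V}
    (p : (restr G U).Walk u w) (h : ∀ v ∈ p.support, v ∈ U') :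
    ∀ e ∈ p.edges, e ∈ (restr G U').edgeSet := by
  intro e he
  induction e with
  | h a b =>
    have hadj := p.adj_of_mem_edges he
    exact ⟨hadj.1, h a (p.fst_mem_support_of_mem_edges he),
      h b (p.snd_mem_support_of_mem_edges he)⟩

lemma edges_mem_of_le {G H : SimpleGraph V} (hle : G ≤ H) {u w : V}
    (p : G.Walk u w) : ∀ e ∈ p.edges, e ∈ H.edgeSet := by
  intro e he
  induction e with
  | h a b => exact hle (p.adj_of_mem_edges he)

lemma length_drop {G : SimpleGraph V} {u w : V} (p : G.Walk u w) (n : ℕ) :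
    (p.drop n).length = p.length - n := by
  induction p generalizing n with
  | nil => simp [SimpleGraph.Walk.drop]
  | cons h q ih =>
    cases n with
    | zero => simp [SimpleGraph.Walk.drop]
    | succ n => simpa [SimpleGraph.Walk.drop] using ih n

lemma edge_getVert_mem {G : SimpleGraph V} {u w : V} (p : G.Walk u w) {i : ℕ}
    (h : i < p.length) : s(p.getVert i, p.getVert (i + 1)) ∈ p.edges := by
  induction p generalizing i with
  | nil => simp at h
  | cons ha q ih =>
    cases i with
    | zero =>
      simp [SimpleGraph.Walk.getVert_zero, SimpleGraph.Walk.getVert_cons_succ]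
    | succ i =>
      simp only [SimpleGraph.Walk.getVert_cons_succ, SimpleGraph.Walk.edges_cons,
        List.mem_cons]
      exact Or.inr (ih (by simpa using Nat.succ_lt_succ_iff.mp h))

/-- On a minimum-length walk, any two adjacent support vertices are joined by an edge
of the walk. -/
lemma shortcut {H : SimpleGraph V} {x y u v : V} (P : H.Walk x y)
    (hmin : ∀ Q : H.Walk x y, P.length ≤ Q.length)
    (hu : u ∈ P.support) (hv : v ∈ P.support) (huv : H.Adj u v) :
    s(u, v) ∈ P.edges := by
  obtain ⟨i, hiu, hil⟩ := SimpleGraph.Walk.mem_support_iff_exists_getVert.mp hu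
  obtain ⟨j, hjv, hjl⟩ := SimpleGraph.Walk.mem_support_iff_exists_getVert.mp hv
  -- an auxiliary claim for ordered indices
  have key : ∀ (a b : V) (i j : ℕ), i < j → j ≤ P.length → P.getVert i = a →
      P.getVert j = b → H.Adj a b → s(a, b) ∈ P.edges := by
    intro a b i j hij hjl hia hjb hab
    rcases Nat.lt_or_ge (i + 1) j with hlt | hge
    · -- build a shorter walk, contradiction
      exfalso
      have hil : i ≤ P.length := by omega
      -- prefix walk from x to P.getVert i of length i
      have hgv : P.reverse.getVert (P.length - i) = P.getVert i := by
        rw [SimpleGraph.Walk.getVert_reverse]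
        congr 1
        omega
      let Pre : H.Walk x (P.getVert i) :=
        ((P.reverse.drop (P.length - i)).copy hgv rfl).reverse
      have hPre : Pre.length = i := by
        simp only [Pre, SimpleGraph.Walk.length_reverse, SimpleGraph.Walk.length_copy]
        rw [length_drop, SimpleGraph.Walk.length_reverse]
        omega
      have hadj : H.Adj (P.getVert i) (P.getVert j) := by rw [hia, hjb]; exact hab
      let Q : H.Walk x y := Pre.append (SimpleGraph.Walk.cons hadj (P.drop j))
      have hQ : Q.length = i + 1 + (P.length - j) := by
        simp only [Q, SimpleGraph.Walk.length_append, SimpleGraph.Walk.length_cons]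
        rw [hPre, length_drop]
        omega
      have := hmin Q
      omega
    · have : j = i + 1 := by omega
      subst this
      have := edge_getVert_mem P (i := i) (by omega)
      rwa [hia, hjb] at this
  rcases Nat.lt_trichotomy i j with h | h | h
  · exact key u v i j h hjl hiu hjv huv
  · exact absurd (hiu.symm.trans (h ▸ hjv)) huv.ne
  · rw [Sym2.eq_swap]
    exact key v u j i h hil hjv hiu huv.symm

lemma exists_min_card {p : Finset V → Prop} (h : ∃ S, p S) :
    ∃ S, p S ∧ ∀ T, p T → S.card ≤ T.card := by
  classical
  obtain ⟨S, hS⟩ := h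
  have hn : ∃ n, ∃ S : Finset V, p S ∧ S.card = n := ⟨S.card, S, hS, rfl⟩
  obtain ⟨S', hS', hcard⟩ := Nat.find_spec hn
  exact ⟨S', hS', fun T hT => hcard ▸ Nat.find_le ⟨T, hT, rfl⟩⟩

section Sep

variable [DecidableEq V] {G : SimpleGraph V} {W S : Finset V} {a b : V}

/-- In a minimal separator `S` of `a` and `b`, every vertex of `S` has a neighbor in the
component of `a`. -/
lemma sep_nbr (haW : a ∈ W) (hbW : b ∈ W) (haS : a ∉ S) (hbS : b ∉ S) (hSW : S ⊆ W)
    (hsep : ¬(restr G (W \ S)).Reachable a b)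
    (hmin : ∀ T : Finset V, T ⊆ W → a ∉ T → b ∉ T →
      ¬(restr G (W \ T)).Reachable a b → S.card ≤ T.card)
    {x : V} (hx : x ∈ S) :
    ∃ p, p ∈ W \ S ∧ (restr G (W \ S)).Reachable a p ∧ G.Adj x p := by
  set T := S.erase x with hT
  have hTcard : T.card < S.card := Finset.card_erase_lt_of_mem hx
  have hTreach : (restr G (W \ T)).Reachable a b := by
    by_contra hc
    have := hmin T (fun v hv => hSW (Finset.mem_of_mem_erase hv))
      (fun h => haS (Finset.mem_of_mem_erase h)) (fun h => hbS (Finset.mem_of_mem_erase h)) hc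
    omega
  obtain ⟨w⟩ := hTreach
  have hWT : ∀ v, v ∈ W \ T → v ≠ x → v ∈ W \ S := by
    intro v hv hvx
    rw [Finset.mem_sdiff] at hv ⊢
    exact ⟨hv.1, fun hvS => hv.2 (Finset.mem_erase.mpr ⟨hvx, hvS⟩)⟩
  have hbWT : b ∈ W \ T :=
    Finset.mem_sdiff.mpr ⟨hbW, fun h => hbS (Finset.mem_of_mem_erase h)⟩
  have hxw : x ∈ w.support := by
    by_contra hxw
    refine hsep ⟨w.transfer _ (edges_mem_restr w ?_)⟩
    intro v hv
    exact hWT v (support_subset_restr w hbWT v hv) (fun h => hxw (h ▸ hv))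
  set t := w.takeUntil x hxw with ht
  have hcount : t.support.count x = 1 := w.count_support_takeUntil_eq_one hxw
  have hax : a ≠ x := fun h => haS (h ▸ hx)
  have hnn : ¬t.reverse.Nil := Walk.not_nil_of_ne (fun h => hax h.symm)
  obtain ⟨p₀, hadj, q, hq⟩ := Walk.not_nil_iff.mp hnn
  have hsup : t.reverse.support = x :: q.support := by rw [hq, Walk.support_cons]
  have hxq : x ∉ q.support := by
    have h1 : (x :: q.support).count x = 1 := by
      rw [← hsup, Walk.support_reverse, List.count_reverse, hcount]
    rw [List.count_cons_self] at h1
    exact List.count_eq_zero.mp (by omega)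
  have hxWT : x ∈ W \ T := Finset.mem_sdiff.mpr ⟨hSW hx, Finset.notMem_erase x S⟩
  have hqsub : ∀ v ∈ q.support, v ∈ W \ S := by
    intro v hv
    have hvx : v ≠ x := fun h => hxq (h ▸ hv)
    refine hWT v (support_subset_restr t hxWT v ?_) hvx
    rw [← List.mem_reverse, ← Walk.support_reverse, hsup]
    exact List.mem_cons_of_mem _ hv
  have hq' : (restr G (W \ S)).Walk p₀ a := q.transfer _ (edges_mem_restr q hqsub)
  have hreach : (restr G (W \ S)).Reachable a p₀ := (Walk.reachable hq').symm
  have hp₀x : p₀ ≠ x := fun h => hxq (h ▸ q.start_mem_support)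
  have hp₀ : p₀ ∈ W \ S := hWT p₀ hadj.2.2 hp₀x
  exact ⟨p₀, hp₀, hreach, hadj.1⟩

/-- Construction of a shortest `x`-`y` path through (one side's component plus `x,y`). -/
lemma side_path {c x y px py : V}
    (hxW : x ∈ W) (hyW : y ∈ W) (hxS : x ∈ S) (hyS : y ∈ S) (hxy : x ≠ y) (hnxy : ¬G.Adj x y)
    (hpx : px ∈ W \ S) (hpy : py ∈ W \ S)
    (hrpx : (restr G (W \ S)).Reachable c px) (hrpy : (restr G (W \ S)).Reachable c py)
    (hapx : G.Adj x px) (hapy : G.Adj y py) :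
    ∃ (A : Finset V) (P : (restr G (insert x (insert y A))).Walk x y),
      (∀ v ∈ A, v ∈ W \ S ∧ (restr G (W \ S)).Reachable c v) ∧
      x ∉ A ∧ y ∉ A ∧
      P.IsPath ∧ 2 ≤ P.length ∧
      ∀ Q : (restr G (insert x (insert y A))).Walk x y, P.length ≤ Q.length := by
  classical
  set A := (W \ S).filter (fun v => (restr G (W \ S)).Reachable c v) with hA
  have hchar : ∀ v, v ∈ A ↔ v ∈ W \ S ∧ (restr G (W \ S)).Reachable c v := by
    intro v; simp [hA]
  have hxA : x ∉ A := fun h => (Finset.mem_sdiff.mp ((hchar x).mp h).1).2 hxS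
  have hyA : y ∉ A := fun h => (Finset.mem_sdiff.mp ((hchar y).mp h).1).2 hyS
  obtain ⟨w⟩ := hrpx.symm.trans hrpy
  have hwsub : ∀ v ∈ w.support, v ∈ A := by
    intro v hv
    obtain ⟨q, r, rfl⟩ := Walk.mem_support_iff_exists_append.mp hv
    refine (hchar v).mpr ⟨support_subset_restr _ (Finset.mem_sdiff.mpr
      (Finset.mem_sdiff.mp hpy)) v hv, hrpx.trans ⟨q⟩⟩
  have hpxA : px ∈ A := hwsub px w.start_mem_support
  have hpyA : py ∈ A := hwsub py w.end_mem_support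
  set setA := insert x (insert y A) with hsetA
  have hsub' : ∀ v ∈ w.support, v ∈ setA := fun v hv =>
    Finset.mem_insert_of_mem (Finset.mem_insert_of_mem (hwsub v hv))
  have w' : (restr G setA).Walk px py := w.transfer _ (edges_mem_restr w hsub')
  have h1 : (restr G setA).Adj x px :=
    ⟨hapx, Finset.mem_insert_self _ _,
      Finset.mem_insert_of_mem (Finset.mem_insert_of_mem hpxA)⟩
  have h2 : (restr G setA).Adj py y :=
    ⟨hapy.symm, Finset.mem_insert_of_mem (Finset.mem_insert_of_mem hpyA),
      Finset.mem_insert_of_mem (Finset.mem_insert_self _ _)⟩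
  have hreach : (restr G setA).Reachable x y :=
    ⟨Walk.cons h1 (w'.append (Walk.cons h2 Walk.nil))⟩
  obtain ⟨P, hPlen⟩ := hreach.exists_walk_length_eq_dist
  have hmin : ∀ Q : (restr G setA).Walk x y, P.length ≤ Q.length := fun Q => by
    rw [hPlen]; exact dist_le Q
  have hpath : P.IsPath := P.isPath_of_length_eq_dist hPlen
  refine ⟨A, P, fun v hv => (hchar v).mp hv, hxA, hyA, hpath, ?_, hmin⟩
  rcases Nat.lt_or_ge P.length 2 with h | h
  · exfalso
    have h0 : P.length ≠ 0 := fun h0 => hxy (Walk.eq_of_length_eq_zero h0)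
    have h1 : P.length = 1 := by omega
    exact hnxy (restr_le (P.adj_of_length_eq_one h1))
  · exact h

/-- A minimal separator in a chordal graph is a clique. -/
lemma sep_clique (hG : IsChordal G) (haW : a ∈ W) (hbW : b ∈ W) (haS : a ∉ S) (hbS : b ∉ S)
    (hSW : S ⊆ W)
    (hsep : ¬(restr G (W \ S)).Reachable a b)
    (hmin : ∀ T : Finset V, T ⊆ W → a ∉ T → b ∉ T →
      ¬(restr G (W \ T)).Reachable a b → S.card ≤ T.card)
    {x y : V} (hx : x ∈ S) (hy : y ∈ S) (hxy : x ≠ y) : G.Adj x y := by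
  by_contra hnxy
  have hxW : x ∈ W := hSW hx
  have hyW : y ∈ W := hSW hy
  -- neighbors of x and y in the component of a
  obtain ⟨px, hpx, hrpx, hapx⟩ := sep_nbr haW hbW haS hbS hSW hsep hmin hx
  obtain ⟨py, hpy, hrpy, hapy⟩ := sep_nbr haW hbW haS hbS hSW hsep hmin hy
  -- neighbors of x and y in the component of b
  have hsep' : ¬(restr G (W \ S)).Reachable b a := fun h => hsep h.symm
  have hmin' : ∀ T : Finset V, T ⊆ W → b ∉ T → a ∉ T →
      ¬(restr G (W \ T)).Reachable b a → S.card ≤ T.card :=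
    fun T h1 h2 h3 h4 => hmin T h1 h3 h2 (fun h => h4 h.symm)
  obtain ⟨qx, hqx, hrqx, haqx⟩ := sep_nbr hbW haW hbS haS hSW hsep' hmin' hx
  obtain ⟨qy, hqy, hrqy, haqy⟩ := sep_nbr hbW haW hbS haS hSW hsep' hmin' hy
  -- shortest paths through the two sides
  obtain ⟨A, PA, hcharA, hxAn, hyAn, hPApath, hPAlen, hPAmin⟩ :=
    side_path hxW hyW hx hy hxy hnxy hpx hpy hrpx hrpy hapx hapy
  obtain ⟨B, PB, hcharB, hxBn, hyBn, hPBpath, hPBlen, hPBmin⟩ :=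
    side_path hxW hyW hx hy hxy hnxy hqx hqy hrqx hrqy haqx haqy
  have hABdisj : ∀ v, v ∈ A → v ∈ B → False := fun v hvA hvB =>
    hsep (((hcharA v hvA).2).trans ((hcharB v hvB).2).symm)
  have hysetA : y ∈ (insert x (insert y A)) := Finset.mem_insert_of_mem (Finset.mem_insert_self _ _)
  have hysetB : y ∈ (insert x (insert y B)) := Finset.mem_insert_of_mem (Finset.mem_insert_self _ _)
  have hPAsub : ∀ v ∈ PA.support, v ∈ (insert x (insert y A)) := support_subset_restr PA hysetA
  have hPBsub : ∀ v ∈ PB.support, v ∈ (insert x (insert y B)) := support_subset_restr PB hysetB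
  have hsetAW : ∀ v ∈ (insert x (insert y A)), v ∈ W := by
    intro v hv
    rcases Finset.mem_insert.mp hv with rfl | hv
    · exact hxW
    rcases Finset.mem_insert.mp hv with rfl | hv
    · exact hyW
    · exact (Finset.mem_sdiff.mp (hcharA v hv).1).1
  have hsetBW : ∀ v ∈ (insert x (insert y B)), v ∈ W := by
    intro v hv
    rcases Finset.mem_insert.mp hv with rfl | hv
    · exact hxW
    rcases Finset.mem_insert.mp hv with rfl | hv
    · exact hyW
    · exact (Finset.mem_sdiff.mp (hcharB v hv).1).1
  -- transfer to restr G W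
  set cA : (restr G W).Walk x y :=
    PA.transfer _ (edges_mem_restr PA (fun v hv => hsetAW v (hPAsub v hv))) with hcA
  set cB : (restr G W).Walk x y :=
    PB.transfer _ (edges_mem_restr PB (fun v hv => hsetBW v (hPBsub v hv))) with hcB
  have hcAsup : cA.support = PA.support := Walk.support_transfer _ _
  have hcBsup : cB.support = PB.support := Walk.support_transfer _ _
  have hcAlen : cA.length = PA.length := Walk.length_transfer _ _
  have hcBlen : cB.length = PB.length := Walk.length_transfer _ _
  have hcAnn : ¬cA.Nil := by
    rw [Walk.not_nil_iff_lt_length, hcAlen]; omega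
  set p1 := cA.getVert 1 with hp1
  have hadjxp1 : (restr G W).Adj x p1 := cA.adj_snd hcAnn
  set c : (restr G W).Walk x x :=
    Walk.cons hadjxp1 (cA.tail.append cB.reverse) with hcdef
  have hc : c = cA.append cB.reverse := by
    rw [hcdef, ← Walk.cons_append]
    congr 1
    exact Walk.cons_tail_eq cA hcAnn
  -- support lists
  set l1 := cA.tail.support with hl1def
  have hl1 : cA.support = x :: l1 := (Walk.cons_support_tail hcAnn).symm
  have hcApath : cA.IsPath := hPApath.transfer _
  have hcBpath : cB.IsPath := hPBpath.transfer _
  have hl1nodup : l1.Nodup ∧ x ∉ l1 := by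
    have := (Walk.isPath_def _).mp hcApath
    rw [hl1, List.nodup_cons] at this
    exact ⟨this.2, this.1⟩
  have hl1sub : ∀ v ∈ l1, v ∈ (insert x (insert y A)) := by
    intro v hv
    refine hPAsub v ?_
    rw [← hcAsup, hl1]
    exact List.mem_cons_of_mem _ hv
  set l2 := cB.reverse.support.tail with hl2def
  have hl2 : cB.reverse.support = y :: l2 := Walk.support_eq_cons _
  have hl2nodup : l2.Nodup ∧ y ∉ l2 := by
    have := (Walk.isPath_def _).mp hcBpath.reverse
    rw [hl2, List.nodup_cons] at this
    exact ⟨this.2, this.1⟩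
  have hl2sub : ∀ v ∈ l2, v ∈ (insert x (insert y B)) := by
    intro v hv
    refine hPBsub v ?_
    rw [← hcBsup, ← List.mem_reverse, ← Walk.support_reverse, hl2]
    exact List.mem_cons_of_mem _ hv
  -- the appended walk is a path
  have hxl1 : x ∉ l1 := hl1nodup.2
  have hyl2 : y ∉ l2 := hl2nodup.2
  have hdisj12 : ∀ v, v ∈ l1 → v ∈ l2 → False := by
    intro v h1 h2
    have hvx : v ≠ x := fun h => hxl1 (h ▸ h1)
    have hvy : v ≠ y := fun h => hyl2 (h ▸ h2)
    have hvA : v ∈ A := by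
      rcases Finset.mem_insert.mp (hl1sub v h1) with h | h
      · exact absurd h hvx
      rcases Finset.mem_insert.mp h with h | h
      · exact absurd h hvy
      · exact h
    have hvB : v ∈ B := by
      rcases Finset.mem_insert.mp (hl2sub v h2) with h | h
      · exact absurd h hvx
      rcases Finset.mem_insert.mp h with h | h
      · exact absurd h hvy
      · exact h
    exact hABdisj v hvA hvB
  have happpath : (cA.tail.append cB.reverse).IsPath := by
    rw [Walk.isPath_def, Walk.support_append, ← hl1def, ← hl2def]
    exact List.Nodup.append hl1nodup.1 hl2nodup.1 (fun v h1 h2 => hdisj12 v h1 h2)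
  -- p1 facts
  have hp1l1 : p1 ∈ l1 := cA.tail.start_mem_support
  have hp1x : p1 ≠ x := fun h => hxl1 (h ▸ hp1l1)
  have hp1y : p1 ≠ y := fun h => hnxy (h ▸ hadjxp1.1)
  have hp1A : p1 ∈ A := by
    rcases Finset.mem_insert.mp (hl1sub p1 hp1l1) with h | h
    · exact absurd h hp1x
    rcases Finset.mem_insert.mp h with h | h
    · exact absurd h hp1y
    · exact h
  -- the first edge is not in the rest
  have hfirst : s(x, p1) ∉ (cA.tail.append cB.reverse).edges := by
    intro he
    rw [Walk.edges_append, List.mem_append] at he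
    rcases he with he | he
    · exact hxl1 ((cA.tail.fst_mem_support_of_mem_edges he))
    · have : p1 ∈ cB.reverse.support := cB.reverse.snd_mem_support_of_mem_edges he
      rw [hl2] at this
      rcases List.mem_cons.mp this with h | h
      · exact hp1y h
      · have := hl2sub p1 h
        rcases Finset.mem_insert.mp this with h' | h'
        · exact hp1x h'
        rcases Finset.mem_insert.mp h' with h' | h'
        · exact hp1y h'
        · exact hABdisj p1 hp1A h'
  have hcyc : c.IsCycle := (Walk.cons_isCycle_iff _ _).mpr ⟨happpath, hfirst⟩
  have hclen : 3 < c.length := by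
    have : c.length = cA.length + cB.length := by
      rw [hc, Walk.length_append, Walk.length_reverse]
    omega
  -- apply chordality
  have hgedges : ∀ e ∈ c.edges, e ∈ G.edgeSet := edges_mem_of_le restr_le c
  obtain ⟨x0, y0, hx0, hy0, hadj0, hne0⟩ :=
    hG x (c.transfer G hgedges) (hcyc.transfer _) (by rw [Walk.length_transfer]; omega)
  rw [Walk.support_transfer] at hx0 hy0
  rw [Walk.edges_transfer] at hne0
  -- support classification
  have hcsup : ∀ v ∈ c.support, v ∈ PA.support ∨ v ∈ PB.support := by
    intro v hv
    rw [hc, Walk.support_append, List.mem_append] at hv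
    rcases hv with hv | hv
    · exact Or.inl (hcAsup ▸ hv)
    · right
      rw [← hl2def] at hv
      have : v ∈ cB.reverse.support := hl2 ▸ List.mem_cons_of_mem _ hv
      rw [Walk.support_reverse, List.mem_reverse, hcBsup] at this
      exact this
  have toPA : ∀ v ∈ c.support, v ∈ (insert x (insert y A)) → v ∈ PA.support := by
    intro v hv hvA
    rcases hcsup v hv with h | h
    · exact h
    · have hvB := hPBsub v h
      rcases Finset.mem_insert.mp hvB with rfl | h'
      · exact PA.start_mem_support
      rcases Finset.mem_insert.mp h' with rfl | h'
      · exact PA.end_mem_support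
      · rcases Finset.mem_insert.mp hvA with rfl | h''
        · exact PA.start_mem_support
        rcases Finset.mem_insert.mp h'' with rfl | h''
        · exact PA.end_mem_support
        · exact absurd h' (fun h' => hABdisj v h'' h')
  have toPB : ∀ v ∈ c.support, v ∈ (insert x (insert y B)) → v ∈ PB.support := by
    intro v hv hvB
    rcases hcsup v hv with h | h
    · have hvA := hPAsub v h
      rcases Finset.mem_insert.mp hvA with rfl | h'
      · exact PB.start_mem_support
      rcases Finset.mem_insert.mp h' with rfl | h'
      · exact PB.end_mem_support
      · rcases Finset.mem_insert.mp hvB with rfl | h''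
        · exact PB.start_mem_support
        rcases Finset.mem_insert.mp h'' with rfl | h''
        · exact PB.end_mem_support
        · exact absurd h'' (fun h'' => hABdisj v h' h'')
    · exact h
  have hclass : ∀ v ∈ c.support, v ∈ (insert x (insert y A)) ∨ v ∈ (insert x (insert y B)) := by
    intro v hv
    rcases hcsup v hv with h | h
    · exact Or.inl (hPAsub v h)
    · exact Or.inr (hPBsub v h)
  have hce : c.edges = PA.edges ++ PB.edges.reverse := by
    rw [hc, Walk.edges_append, Walk.edges_reverse, hcA, hcB,
      Walk.edges_transfer, Walk.edges_transfer]
  -- the two "both on one side" cases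
  have caseA : x0 ∈ (insert x (insert y A)) → y0 ∈ (insert x (insert y A)) → False := by
    intro h1 h2
    have := shortcut PA hPAmin (toPA x0 hx0 h1) (toPA y0 hy0 h2) ⟨hadj0, h1, h2⟩
    exact hne0 (by rw [hce]; exact List.mem_append_left _ this)
  have caseB : x0 ∈ (insert x (insert y B)) → y0 ∈ (insert x (insert y B)) → False := by
    intro h1 h2
    have := shortcut PB hPBmin (toPB x0 hx0 h1) (toPB y0 hy0 h2) ⟨hadj0, h1, h2⟩
    exact hne0 (by rw [hce]; exact List.mem_append_right _ (List.mem_reverse.mpr this))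
  -- the mixed case
  have caseMix : ∀ u v, u ∈ A → v ∈ B → G.Adj u v → False := by
    intro u v huA hvB huv
    have h1 := hcharA u huA
    have h2 := hcharB v hvB
    have hadj' : (restr G (W \ S)).Adj u v := ⟨huv, h1.1, h2.1⟩
    exact hsep ((h1.2.trans hadj'.reachable).trans h2.2.symm)
  -- finish
  have hxsetB : x ∈ (insert x (insert y B)) := Finset.mem_insert_self _ _
  have hxsetA : x ∈ (insert x (insert y A)) := Finset.mem_insert_self _ _
  rcases hclass x0 hx0 with hA1 | hB1 <;> rcases hclass y0 hy0 with hA2 | hB2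
  · exact caseA hA1 hA2
  · -- x0 ∈ (insert x (insert y A)), y0 ∈ (insert x (insert y B))
    rcases Finset.mem_insert.mp hA1 with rfl | h1
    · exact caseB hxsetB hB2
    rcases Finset.mem_insert.mp h1 with rfl | h1
    · exact caseB hysetB hB2
    rcases Finset.mem_insert.mp hB2 with rfl | h2
    · exact caseA hA1 hxsetA
    rcases Finset.mem_insert.mp h2 with rfl | h2
    · exact caseA hA1 hysetA
    · exact caseMix x0 y0 h1 h2 hadj0
  · -- x0 ∈ (insert x (insert y B)), y0 ∈ (insert x (insert y A))
    rcases Finset.mem_insert.mp hB1 with rfl | h1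
    · exact caseA hxsetA hA2
    rcases Finset.mem_insert.mp h1 with rfl | h1
    · exact caseA hysetA hA2
    rcases Finset.mem_insert.mp hA2 with rfl | h2
    · exact caseB hB1 hxsetB
    rcases Finset.mem_insert.mp h2 with rfl | h2
    · exact caseB hB1 hysetB
    · exact caseMix y0 x0 h2 h1 hadj0.symm
  · exact caseB hB1 hB2

end Sep

/-- `u` is simplicial within `W`: its neighbors inside `W` are pairwise adjacent. -/
def SimpIn (G : SimpleGraph V) (W : Finset V) (u : V) : Prop :=
  ∀ x y, x ∈ W → y ∈ W → G.Adj u x → G.Adj u y → x ≠ y → G.Adj x y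

/-- The inductive statement: a simplicial vertex exists, and if `W` is not a clique there
are two nonadjacent ones. -/
def Concl (G : SimpleGraph V) (W : Finset V) : Prop :=
  (∃ u ∈ W, SimpIn G W u) ∧
  ∀ a b, a ∈ W → b ∈ W → a ≠ b → ¬G.Adj a b →
    ∃ u v, u ∈ W ∧ v ∈ W ∧ SimpIn G W u ∧ SimpIn G W v ∧ u ≠ v ∧ ¬G.Adj u v

section Induction

variable [DecidableEq V] {G : SimpleGraph V} {W S : Finset V} {a b : V}

lemma side (IH : ∀ W' : Finset V, W'.card < W.card → W'.Nonempty → Concl G W')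
    (haW : a ∈ W) (hbW : b ∈ W) (haS : a ∉ S) (hbS : b ∉ S) (hSW : S ⊆ W)
    (hsep : ¬(restr G (W \ S)).Reachable a b)
    (hclS : ∀ x ∈ S, ∀ y ∈ S, x ≠ y → G.Adj x y) :
    ∃ u, u ∈ W \ S ∧ (restr G (W \ S)).Reachable a u ∧ SimpIn G W u := by
  classical
  set A := (W \ S).filter (fun v => (restr G (W \ S)).Reachable a v) with hA
  have hchar : ∀ v, v ∈ A ↔ v ∈ W \ S ∧ (restr G (W \ S)).Reachable a v := by
    intro v; simp [hA]
  have haA : a ∈ A := (hchar a).mpr ⟨Finset.mem_sdiff.mpr ⟨haW, haS⟩, Reachable.refl _⟩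
  set W' := A ∪ S with hW'
  have hW'sub : W' ⊆ W :=
    Finset.union_subset (fun v hv => (Finset.mem_sdiff.mp ((hchar v).mp hv).1).1) hSW
  have hbW' : b ∉ W' := by
    intro h
    rcases Finset.mem_union.mp h with h | h
    · exact hsep ((hchar b).mp h).2
    · exact hbS h
  have hcard : W'.card < W.card :=
    Finset.card_lt_card (Finset.ssubset_iff_of_subset hW'sub |>.mpr ⟨b, hbW, hbW'⟩)
  have hnb : ∀ u ∈ A, ∀ v ∈ W, G.Adj u v → v ∈ W' := by
    intro u hu v hv huv
    by_cases hvS : v ∈ S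
    · exact Finset.mem_union_right _ hvS
    · refine Finset.mem_union_left _ ((hchar v).mpr ⟨Finset.mem_sdiff.mpr ⟨hv, hvS⟩, ?_⟩)
      have hu' := (hchar u).mp hu
      exact hu'.2.trans (Adj.reachable ⟨huv, hu'.1, Finset.mem_sdiff.mpr ⟨hv, hvS⟩⟩)
  have hconcl := IH W' hcard ⟨a, Finset.mem_union_left _ haA⟩
  have key : ∃ u ∈ A, SimpIn G W' u := by
    by_cases hcl : ∀ p q, p ∈ W' → q ∈ W' → p ≠ q → G.Adj p q
    · exact ⟨a, haA, fun x y hx hy _ _ hne => hcl x y hx hy hne⟩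
    · push_neg at hcl
      obtain ⟨p, q, hp, hq, hpq, hnpq⟩ := hcl
      obtain ⟨u, v, huW, hvW, hsu, hsv, huv, hnuv⟩ := hconcl.2 p q hp hq hpq hnpq
      rcases Finset.mem_union.mp huW with h | h
      · exact ⟨u, h, hsu⟩
      · rcases Finset.mem_union.mp hvW with h' | h'
        · exact ⟨v, h', hsv⟩
        · exact absurd (hclS u h v h' huv) hnuv
  obtain ⟨u, huA, hsu⟩ := key
  refine ⟨u, ((hchar u).mp huA).1, ((hchar u).mp huA).2, ?_⟩
  intro x y hx hy hux huy hne
  exact hsu x y (hnb u huA x hx hux) (hnb u huA y hy huy) hux huy hne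

lemma main (G : SimpleGraph V) (hG : IsChordal G) :
    ∀ (W : Finset V), W.Nonempty → Concl G W := by
  classical
  have H : ∀ (n : ℕ) (W : Finset V), W.card = n → W.Nonempty → Concl G W := by
    intro n
    induction n using Nat.strong_induction_on with
    | _ n IH =>
      intro W hcard hne
      have IH' : ∀ W' : Finset V, W'.card < W.card → W'.Nonempty → Concl G W' :=
        fun W' h h2 => IH W'.card (hcard ▸ h) W' rfl h2
      by_cases hcl : ∀ p q, p ∈ W → q ∈ W → p ≠ q → G.Adj p q
      · constructor
        · obtain ⟨u, hu⟩ := hne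
          exact ⟨u, hu, fun x y hx hy _ _ hne' => hcl x y hx hy hne'⟩
        · intro a b ha hb hab hnab
          exact absurd (hcl a b ha hb hab) hnab
      · push_neg at hcl
        obtain ⟨a, b, haW, hbW, hab, hnab⟩ := hcl
        have hsep0 : ∃ S : Finset V,
            S ⊆ W ∧ a ∉ S ∧ b ∉ S ∧ ¬(restr G (W \ S)).Reachable a b := by
          refine ⟨W \ {a, b}, Finset.sdiff_subset, by simp [haW], by simp [hbW], ?_⟩
          rintro ⟨w⟩
          have hnn : ¬w.Nil := Walk.not_nil_of_ne hab
          obtain ⟨c', hadj, q, -⟩ := Walk.not_nil_iff.mp hnn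
          have hc' : c' ∈ W \ (W \ {a, b}) := hadj.2.2
          rw [Finset.sdiff_sdiff_self_left, Finset.mem_inter] at hc'
          rcases Finset.mem_insert.mp hc'.2 with rfl | h
          · exact hadj.1.ne rfl
          · rw [Finset.mem_singleton] at h
            subst h
            exact hnab hadj.1
        obtain ⟨S, ⟨hSW, haS, hbS, hsep⟩, hminS⟩ := exists_min_card hsep0
        have hmin : ∀ T : Finset V, T ⊆ W → a ∉ T → b ∉ T →
            ¬(restr G (W \ T)).Reachable a b → S.card ≤ T.card :=
          fun T h1 h2 h3 h4 => hminS T ⟨h1, h2, h3, h4⟩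
        have hclS : ∀ x ∈ S, ∀ y ∈ S, x ≠ y → G.Adj x y :=
          fun x hx y hy hxy => sep_clique hG haW hbW haS hbS hSW hsep hmin hx hy hxy
        have hsep' : ¬(restr G (W \ S)).Reachable b a := fun h => hsep h.symm
        obtain ⟨uA, huA, hruA, hsuA⟩ := side IH' haW hbW haS hbS hSW hsep hclS
        obtain ⟨uB, huB, hruB, hsuB⟩ := side IH' hbW haW hbS haS hSW hsep' hclS
        have hne' : uA ≠ uB := by
          intro h
          subst h
          exact hsep (hruA.trans hruB.symm)
        have hnadj : ¬G.Adj uA uB := fun h =>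
          hsep ((hruA.trans (Adj.reachable ⟨h, huA, huB⟩)).trans hruB.symm)
        have huAW : uA ∈ W := (Finset.mem_sdiff.mp huA).1
        have huBW : uB ∈ W := (Finset.mem_sdiff.mp huB).1
        exact ⟨⟨uA, huAW, hsuA⟩,
          fun _ _ _ _ _ _ => ⟨uA, uB, huAW, huBW, hsuA, hsuB, hne', hnadj⟩⟩
  exact fun W => H W.card W rfl

end Induction

end ChordalAux

/-- Every chordal graph with at least one vertex has a simplicial vertex, i.e. a
vertex whose neighborhood is a clique. -/
theorem chordal_exists_simplicial {V : Type*} [Fintype V] [Nonempty V]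
    (G : SimpleGraph V) (hG : IsChordal G) :
    ∃ v : V, G.IsClique (G.neighborSet v) := by
  classical
  obtain ⟨u, -, hsu⟩ := (ChordalAux.main G hG Finset.univ Finset.univ_nonempty).1
  refine ⟨u, ?_⟩
  intro x hx y hy hne
  exact hsu x y (Finset.mem_univ x) (Finset.mem_univ y) hx hy hne
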